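/- (Lemma 3) The composition of polyphase anchoring with window attention is general shift-equivariant: fix s, H, W, d, d_k, d_v ≥ 1, weight matrices W_q, W_k : Matrix (Fin d) (Fin d_k) ℝ and W_v : Matrix (Fin d) (Fin d_v) ℝ, and X : ZMod (s·H) × ZMod (s·W) → EuclideanSpace ℝ (Fin d) whose polyphase norms have a unique maximizer. Then for every (u,v) ∈ ZMod (s·H) × ZMod (s·W) there exists (u',v') ∈ ZMod (s·H) × ZMod (s·W) such that A_w(P(shift_{(u,v)} X)) = shift_{(u',v')} (A_w(P X)). -/

import Mathlib

open Matrix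
noncomputable section
/-- Circular shift of a 2D signal `X : ZMod M × ZMod N → α` by `(u,v)`:
`(shift_{(u,v)} X)(i,j) = X (i-u, j-v)`. -/
def cshift2 {M N : ℕ} {α : Type*} (uv : ZMod M × ZMod N)
    (X : ZMod M × ZMod N → α) : ZMod M × ZMod N → α :=
  fun ij => X (ij.1 - uv.1, ij.2 - uv.2)
/-- Residue of a grid point of `ZMod (s·H) × ZMod (s·W)` modulo `s` in each coordinate. -/
def resPh (s : ℕ) {H W : ℕ} (ij : ZMod (s * H) × ZMod (s * W)) : ZMod s × ZMod s :=
  (ZMod.castHom (dvd_mul_right s H) (ZMod s) ij.1,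
   ZMod.castHom (dvd_mul_right s W) (ZMod s) ij.2)

/-- Polyphase norm `N_{pq}(X) = ∑ over grid points with residue `(p,q)` of `‖X(i,j)‖²`. -/
def polyNorm (s : ℕ) {H W C : ℕ} [NeZero (s * H)] [NeZero (s * W)]
    (X : ZMod (s * H) × ZMod (s * W) → EuclideanSpace ℝ (Fin C))
    (pq : ZMod s × ZMod s) : ℝ :=
  ∑ ij : ZMod (s * H) × ZMod (s * W), if resPh s ij = pq then ‖X ij‖ ^ 2 else 0

/-- The polyphase norms of `X` have a (unique) strict maximizer over `ZMod s × ZMod s`. -/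
def HasUniqueMaxPhase (s : ℕ) {H W C : ℕ} [NeZero (s * H)] [NeZero (s * W)]
    (X : ZMod (s * H) × ZMod (s * W) → EuclideanSpace ℝ (Fin C)) : Prop :=
  ∃ pq : ZMod s × ZMod s, ∀ pq' : ZMod s × ZMod s, pq' ≠ pq →
    polyNorm s X pq' < polyNorm s X pq

open Classical in
/-- The maximizing phase `(p̂,q̂)`, cast into the big grid via canonical representatives. -/
def anchorPhase (s : ℕ) {H W C : ℕ} [NeZero (s * H)] [NeZero (s * W)]
    (X : ZMod (s * H) × ZMod (s * W) → EuclideanSpace ℝ (Fin C)) :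
    ZMod (s * H) × ZMod (s * W) :=
  if h : HasUniqueMaxPhase s X then
    (((h.choose.1.val : ℕ) : ZMod (s * H)), ((h.choose.2.val : ℕ) : ZMod (s * W)))
  else (0, 0)

/-- Polyphase anchoring operator: `P X = shift_{(-p̂',-q̂')} X`, circularly shifting `X`
so that its maximizing polyphase aligns with the anchors. -/
def polyAnchor (s : ℕ) {H W C : ℕ} [NeZero (s * H)] [NeZero (s * W)]
    (X : ZMod (s * H) × ZMod (s * W) → EuclideanSpace ℝ (Fin C)) :
    ZMod (s * H) × ZMod (s * W) → EuclideanSpace ℝ (Fin C) :=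
  cshift2 (-(anchorPhase s X).1, -(anchorPhase s X).2) X
/-- Two grid points lie in the same `s×s` window iff the floors of their coordinates
divided by `s` agree: `⌊i.val/s⌋ = ⌊i'.val/s⌋` and `⌊j.val/s⌋ = ⌊j'.val/s⌋`. -/
def sameWindow (s : ℕ) {H W : ℕ} (ij ij' : ZMod (s * H) × ZMod (s * W)) : Prop :=
  ij.1.val / s = ij'.1.val / s ∧ ij.2.val / s = ij'.2.val / s

instance (s : ℕ) {H W : ℕ} (ij ij' : ZMod (s * H) × ZMod (s * W)) :
    Decidable (sameWindow s ij ij') :=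
  inferInstanceAs (Decidable (_ ∧ _))

/-- Window attention with `s×s` windows: self-attention restricted to the window
containing each query token, with softmax taken over that window. -/
def windowAttn (s : ℕ) {H W d dk dv : ℕ} [NeZero (s * H)] [NeZero (s * W)]
    (Wq Wk : Matrix (Fin d) (Fin dk) ℝ) (Wv : Matrix (Fin d) (Fin dv) ℝ)
    (X : ZMod (s * H) × ZMod (s * W) → (Fin d → ℝ)) :
    ZMod (s * H) × ZMod (s * W) → (Fin dv → ℝ) :=
  fun ij => ∑ ij' : ZMod (s * H) × ZMod (s * W),
    if sameWindow s ij ij' then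
      (Real.exp (Wq.transpose.mulVec (X ij) ⬝ᵥ Wk.transpose.mulVec (X ij')) /
        ∑ ij'' : ZMod (s * H) × ZMod (s * W),
          if sameWindow s ij ij'' then
            Real.exp (Wq.transpose.mulVec (X ij) ⬝ᵥ Wk.transpose.mulVec (X ij''))
          else 0)
        • Wv.transpose.mulVec (X ij')
    else 0


-- ===== Auxiliary lemmas =====

lemma mul_add_mod_helper {s H : ℕ} (hH : 0 < H) (m r : ℕ) (hr : r < s) :
    (s * m + r) % (s * H) = s * (m % H) + r := by
  conv_lhs => rw [← Nat.div_add_mod m H]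
  have h1 : s * (H * (m / H) + m % H) + r = s * (m % H) + r + (m / H) * (s * H) := by ring
  rw [h1, Nat.add_mul_mod_self_right]
  apply Nat.mod_eq_of_lt
  have h2 : m % H < H := Nat.mod_lt _ hH
  have h3 : s * (m % H) + s = s * (m % H + 1) := (Nat.mul_succ s _).symm
  have h4 : s * (m % H + 1) ≤ s * H := Nat.mul_le_mul_left s (by omega)
  omega

lemma val_add_div_of_dvd {s H : ℕ} [NeZero s] [NeZero H] (a i : ZMod (s * H))
    (ha : s ∣ a.val) : (i + a).val / s = (i.val / s + a.val / s) % H := by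
  have hs : 0 < s := Nat.pos_of_ne_zero (NeZero.ne s)
  have hH : 0 < H := Nat.pos_of_ne_zero (NeZero.ne H)
  obtain ⟨c, hc⟩ := ha
  have hca : a.val / s = c := by rw [hc, Nat.mul_div_cancel_left _ hs]
  have hiv : i.val = s * (i.val / s) + i.val % s := (Nat.div_add_mod _ _).symm
  have hr : i.val % s < s := Nat.mod_lt _ hs
  have hva : (i + a).val = (i.val + a.val) % (s * H) := ZMod.val_add i a
  have hsum : i.val + a.val = s * (i.val / s + c) + i.val % s := by
    rw [Nat.mul_add]; omega
  rw [hva, hsum, mul_add_mod_helper hH _ _ hr, Nat.mul_add_div hs,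
    Nat.div_eq_of_lt hr, Nat.add_zero, hca]

lemma div_shift_iff {s H : ℕ} [NeZero s] [NeZero H] (a i i' : ZMod (s * H))
    (ha : s ∣ a.val) : (i + a).val / s = (i' + a).val / s ↔ i.val / s = i'.val / s := by
  rw [val_add_div_of_dvd a i ha, val_add_div_of_dvd a i' ha]
  have hs : 0 < s := Nat.pos_of_ne_zero (NeZero.ne s)
  have h1 : i.val / s < H := Nat.div_lt_of_lt_mul (ZMod.val_lt i)
  have h2 : i'.val / s < H := Nat.div_lt_of_lt_mul (ZMod.val_lt i')
  constructor
  · intro h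
    have h' : i.val / s ≡ i'.val / s [MOD H] := Nat.ModEq.add_right_cancel' (a.val / s) h
    rwa [Nat.ModEq, Nat.mod_eq_of_lt h1, Nat.mod_eq_of_lt h2] at h'
  · intro h; rw [h]

lemma sameWindow_shift {s H W : ℕ} [NeZero s] [NeZero H] [NeZero W]
    (w p q : ZMod (s * H) × ZMod (s * W)) (h1 : s ∣ w.1.val) (h2 : s ∣ w.2.val) :
    sameWindow s (p.1 + w.1, p.2 + w.2) (q.1 + w.1, q.2 + w.2) ↔ sameWindow s p q :=
  and_congr (div_shift_iff w.1 p.1 q.1 h1) (div_shift_iff w.2 p.2 q.2 h2)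

lemma sameWindow_sub_iff {s H W : ℕ} [NeZero s] [NeZero H] [NeZero W]
    (w ij q : ZMod (s * H) × ZMod (s * W)) (h1 : s ∣ w.1.val) (h2 : s ∣ w.2.val) :
    sameWindow s ij (q.1 + w.1, q.2 + w.2) ↔ sameWindow s (ij.1 - w.1, ij.2 - w.2) q := by
  have h := sameWindow_shift w (ij.1 - w.1, ij.2 - w.2) q h1 h2
  simpa using h

lemma sum_shift_reindex {s H W : ℕ} [NeZero (s * H)] [NeZero (s * W)] {β : Type*}
    [AddCommMonoid β] (w : ZMod (s * H) × ZMod (s * W))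
    (f : ZMod (s * H) × ZMod (s * W) → β) :
    ∑ q : ZMod (s * H) × ZMod (s * W), f (q.1 + w.1, q.2 + w.2) = ∑ q, f q :=
  Equiv.sum_comp ((Equiv.addRight w.1).prodCongr (Equiv.addRight w.2)) f

lemma windowAttn_shift {s H W d dk dv : ℕ} [NeZero s] [NeZero H] [NeZero W]
    (Wq Wk : Matrix (Fin d) (Fin dk) ℝ) (Wv : Matrix (Fin d) (Fin dv) ℝ)
    (w : ZMod (s * H) × ZMod (s * W)) (h1 : s ∣ w.1.val) (h2 : s ∣ w.2.val)
    (Y : ZMod (s * H) × ZMod (s * W) → (Fin d → ℝ)) :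
    windowAttn s Wq Wk Wv (cshift2 w Y) = cshift2 w (windowAttn s Wq Wk Wv Y) := by
  funext ij
  show _ = windowAttn s Wq Wk Wv Y (ij.1 - w.1, ij.2 - w.2)
  unfold windowAttn
  conv_lhs => rw [← sum_shift_reindex w]
  refine Finset.sum_congr rfl fun q _ => ?_
  simp only [cshift2, add_sub_cancel_right, Prod.mk.eta]
  have hinner : ∀ p : Fin d → ℝ,
      (∑ x : ZMod (s * H) × ZMod (s * W), if sameWindow s ij x then
          Real.exp (Wq.transpose.mulVec p ⬝ᵥ Wk.transpose.mulVec (Y (x.1 - w.1, x.2 - w.2)))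
        else 0)
        = ∑ x : ZMod (s * H) × ZMod (s * W),
            if sameWindow s (ij.1 - w.1, ij.2 - w.2) x then
              Real.exp (Wq.transpose.mulVec p ⬝ᵥ Wk.transpose.mulVec (Y x))
            else 0 := by
    intro p
    conv_lhs => rw [← sum_shift_reindex w]
    refine Finset.sum_congr rfl fun q' _ => ?_
    simp only [add_sub_cancel_right, Prod.mk.eta, sameWindow_sub_iff w ij q' h1 h2]
  rw [hinner]
  simp only [sameWindow_sub_iff w ij q h1 h2]

lemma resPh_add (s : ℕ) {H W : ℕ} (a b : ZMod (s * H) × ZMod (s * W)) :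
    resPh s (a.1 + b.1, a.2 + b.2) = resPh s a + resPh s b := by
  simp only [resPh, Prod.mk_add_mk, map_add]

lemma polyNorm_shift (s : ℕ) {H W C : ℕ} [NeZero (s * H)] [NeZero (s * W)]
    (X : ZMod (s * H) × ZMod (s * W) → EuclideanSpace ℝ (Fin C))
    (uv : ZMod (s * H) × ZMod (s * W)) (pq : ZMod s × ZMod s) :
    polyNorm s (cshift2 uv X) pq = polyNorm s X (pq - resPh s uv) := by
  unfold polyNorm cshift2
  conv_lhs => rw [← sum_shift_reindex uv]
  refine Finset.sum_congr rfl fun q _ => ?_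
  rw [resPh_add]
  simp only [add_sub_cancel_right, Prod.mk.eta, ← eq_sub_iff_add_eq]

lemma anchor_choose_eq {s H W C : ℕ} [NeZero (s * H)] [NeZero (s * W)]
    {X : ZMod (s * H) × ZMod (s * W) → EuclideanSpace ℝ (Fin C)}
    (h : HasUniqueMaxPhase s X) (m : ZMod s × ZMod s)
    (hm : ∀ pq' ≠ m, polyNorm s X pq' < polyNorm s X m) : h.choose = m := by
  by_contra hne
  exact lt_asymm (hm _ hne) (h.choose_spec m (Ne.symm hne))

lemma anchorPhase_eq {s H W C : ℕ} [NeZero (s * H)] [NeZero (s * W)]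
    {X : ZMod (s * H) × ZMod (s * W) → EuclideanSpace ℝ (Fin C)}
    (h : HasUniqueMaxPhase s X) (m : ZMod s × ZMod s)
    (hm : ∀ pq' ≠ m, polyNorm s X pq' < polyNorm s X m) :
    anchorPhase s X = (((m.1.val : ℕ) : ZMod (s * H)), ((m.2.val : ℕ) : ZMod (s * W))) := by
  unfold anchorPhase
  rw [dif_pos h, anchor_choose_eq h m hm]

/-- (Lemma 3) The composition of polyphase anchoring with window attention is general
shift-equivariant: `A_w (P (shift_{(u,v)} X)) = shift_{(u',v')} (A_w (P X))` for some
shift `(u',v')`, where the window size equals the polyphase stride `s`. -/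
theorem polyAnchor_windowAttn_general_shift_equivariant
    (s H W d dk dv : ℕ) [NeZero s] [NeZero H] [NeZero W]
    (hs : 1 ≤ s) (hH : 1 ≤ H) (hW : 1 ≤ W) (hd : 1 ≤ d) (hdk : 1 ≤ dk) (hdv : 1 ≤ dv)
    (Wq Wk : Matrix (Fin d) (Fin dk) ℝ) (Wv : Matrix (Fin d) (Fin dv) ℝ)
    (X : ZMod (s * H) × ZMod (s * W) → EuclideanSpace ℝ (Fin d))
    (hX : HasUniqueMaxPhase s X)
    (uv : ZMod (s * H) × ZMod (s * W)) :
    ∃ u'v' : ZMod (s * H) × ZMod (s * W),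
      windowAttn s Wq Wk Wv (fun ij => WithLp.ofLp (polyAnchor s (cshift2 uv X) ij)) =
        cshift2 u'v' (windowAttn s Wq Wk Wv (fun ij => WithLp.ofLp (polyAnchor s X ij))) := by
  classical
  obtain ⟨m, hm⟩ := id hX
  have hm' : ∀ pq' ≠ m + resPh s uv,
      polyNorm s (cshift2 uv X) pq' < polyNorm s (cshift2 uv X) (m + resPh s uv) := by
    intro pq' hne
    rw [polyNorm_shift, polyNorm_shift, add_sub_cancel_right]
    exact hm _ (fun h => hne (sub_eq_iff_eq_add.mp h))
  have hX' : HasUniqueMaxPhase s (cshift2 uv X) := ⟨m + resPh s uv, hm'⟩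
  have ha : anchorPhase s X = (((m.1.val : ℕ) : ZMod (s * H)), ((m.2.val : ℕ) : ZMod (s * W))) :=
    anchorPhase_eq hX m hm
  have ha' : anchorPhase s (cshift2 uv X) =
      ((((m + resPh s uv).1.val : ℕ) : ZMod (s * H)),
        (((m + resPh s uv).2.val : ℕ) : ZMod (s * W))) :=
    anchorPhase_eq hX' _ hm'
  set a : ZMod (s * H) × ZMod (s * W) := anchorPhase s X with haa
  set a' : ZMod (s * H) × ZMod (s * W) := anchorPhase s (cshift2 uv X) with haa'
  set w : ZMod (s * H) × ZMod (s * W) := (uv.1 - a'.1 + a.1, uv.2 - a'.2 + a.2) with hw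
  have key1 : ∀ x : ZMod (s * H),
      (ZMod.castHom (dvd_mul_right s H) (ZMod s)) x = ((x.val : ℕ) : ZMod s) := fun x => by
    simp [ZMod.castHom_apply, ZMod.natCast_val]
  have key2 : ∀ x : ZMod (s * W),
      (ZMod.castHom (dvd_mul_right s W) (ZMod s)) x = ((x.val : ℕ) : ZMod s) := fun x => by
    simp [ZMod.castHom_apply, ZMod.natCast_val]
  have hres1 : s ∣ w.1.val := by
    have h0 : ((w.1.val : ℕ) : ZMod s) = 0 := by
      rw [← key1]
      have hsplit : (ZMod.castHom (dvd_mul_right s H) (ZMod s)) w.1 =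
          (ZMod.castHom (dvd_mul_right s H) (ZMod s)) uv.1
            - (ZMod.castHom (dvd_mul_right s H) (ZMod s)) a'.1
            + (ZMod.castHom (dvd_mul_right s H) (ZMod s)) a.1 := by
        rw [hw]; simp [map_add, map_sub]
      rw [hsplit, ha, ha']
      rw [map_natCast, map_natCast, ZMod.natCast_rightInverse ((m + resPh s uv).1),
        ZMod.natCast_rightInverse m.1, Prod.fst_add,
        show (ZMod.castHom (dvd_mul_right s H) (ZMod s)) uv.1 = (resPh s uv).1 from rfl]
      ring
    exact (ZMod.natCast_eq_zero_iff _ s).mp h0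
  have hres2 : s ∣ w.2.val := by
    have h0 : ((w.2.val : ℕ) : ZMod s) = 0 := by
      rw [← key2]
      have hsplit : (ZMod.castHom (dvd_mul_right s W) (ZMod s)) w.2 =
          (ZMod.castHom (dvd_mul_right s W) (ZMod s)) uv.2
            - (ZMod.castHom (dvd_mul_right s W) (ZMod s)) a'.2
            + (ZMod.castHom (dvd_mul_right s W) (ZMod s)) a.2 := by
        rw [hw]; simp [map_add, map_sub]
      rw [hsplit, ha, ha']
      rw [map_natCast, map_natCast, ZMod.natCast_rightInverse ((m + resPh s uv).2),
        ZMod.natCast_rightInverse m.2, Prod.snd_add,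
        show (ZMod.castHom (dvd_mul_right s W) (ZMod s)) uv.2 = (resPh s uv).2 from rfl]
      ring
    exact (ZMod.natCast_eq_zero_iff _ s).mp h0
  have hPA : polyAnchor s (cshift2 uv X) = cshift2 w (polyAnchor s X) := by
    funext ij
    show X _ = X _
    refine congrArg X (Prod.ext_iff.mpr ⟨?_, ?_⟩) <;> · show _ = _; rw [hw]; ring
  refine ⟨w, ?_⟩
  rw [hPA]
  exact windowAttn_shift Wq Wk Wv w hres1 hres2 (fun ij => WithLp.ofLp (polyAnchor s X ij))
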